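/- Any two sectors of Σ are either equal or disjoint; moreover, if (A) and 3-MSP hold, the relation s ≈ t (s = t, or there exists r ∈ {s,t}⁻ with r ≠ s, r ≠ t) is an equivalence relation whose classes are sectors, so Σ is a union of sectors. -/
import Mathlib


universe u v

/-- A state property system: states, a complete lattice of properties, and
the actuality map `xi` assigning to each state the set of actual properties. -/
structure SPS (σ : Type u) (L : Type v) [CompleteLattice L] where
  xi : σ → Set L
  top_mem : ∀ p, ⊤ ∈ xi p
  bot_not_mem : ∀ p, ⊥ ∉ xi p
  sInf_mem : ∀ (p : σ) (A : Set L), (∀ a ∈ A, a ∈ xi p) ↔ sInf A ∈ xi p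
  le_iff : ∀ a b : L, a ≤ b ↔ ∀ r, a ∈ xi r → b ∈ xi r

variable {σ : Type u} {L : Type v} [CompleteLattice L]

/-- λ{p,q} : the set of superpositions of the pair p, q. -/
def SPS.lamPair (S : SPS σ L) (p q : σ) : Set σ := {s | S.xi p ∩ S.xi q ⊆ S.xi s}

/-- A set is λ-closed if it contains λ{p,q} for each pair of its points. -/
def SPS.lamClosed (S : SPS σ L) (T : Set σ) : Prop :=
  ∀ p ∈ T, ∀ q ∈ T, S.lamPair p q ⊆ T

/-- λ(P) : the intersection of all λ-closed sets containing P. -/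
def SPS.lam (S : SPS σ L) (P : Set σ) : Set σ :=
  ⋂₀ {G | S.lamClosed G ∧ P ⊆ G}

/-- The set of superpositions of a set of states. -/
def SPS.bar (S : SPS σ L) (T : Set σ) : Set σ :=
  {p | (⋂ s ∈ T, S.xi s) ⊆ S.xi p}

/-- Property (A): at least two states and `xi` order-reflecting (injective). -/
def SPS.propA (S : SPS σ L) : Prop :=
  (∃ p q : σ, p ≠ q) ∧ ∀ p q : σ, S.xi p ⊆ S.xi q → p = q

/-- p is a minimal superposition of A. -/
def SPS.minSup (S : SPS σ L) (A : Set σ) (p : σ) : Prop :=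
  p ∈ S.bar A ∧ ∀ Q : Set σ, Q ⊂ A → p ∉ S.bar Q

/-- The minimal superposition principle for a given set A. -/
def SPS.MSPon (S : SPS σ L) (A : Set σ) : Prop :=
  ∀ p : σ, S.minSup A p →
    ∀ S₁ S₂ : Set σ, S₁ ⊂ A → S₂ ⊂ A → S₁ ∩ S₂ = ∅ → S₁ ∪ S₂ = A →
      (S.bar (S₁ ∪ {p}) ∩ S.bar S₂).Nonempty

/-- n-MSP : MSP for all sets of cardinality at most n. -/
def SPS.nMSP (S : SPS σ L) (n : ℕ) : Prop :=
  ∀ A : Set σ, A.Finite → A.ncard ≤ n → S.MSPon A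

/-- f-MSP : MSP for all finite sets. -/
def SPS.fMSP (S : SPS σ L) : Prop := ∀ A : Set σ, A.Finite → S.MSPon A

/-- The superposition principle holds on a set T. -/
def SPS.SPon (S : SPS σ L) (T : Set σ) : Prop :=
  ∀ p ∈ T, ∀ q ∈ T, p ≠ q → ∃ r ∈ S.bar {p, q}, r ≠ p ∧ r ≠ q

/-- A sector: a nonempty λ-closed set on which SP holds and which is
superposition-isolated from its complement. -/
def SPS.Sector (S : SPS σ L) (T : Set σ) : Prop :=
  T.Nonempty ∧ S.lamClosed T ∧ S.SPon T ∧
    ∀ p ∈ T, ∀ q, q ∉ T → S.bar {p, q} = ({p, q} : Set σ)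

/-- s ≈ t : s = t or there is a superposition of {s,t} distinct from both. -/
def SPS.rel (S : SPS σ L) (s t : σ) : Prop :=
  s = t ∨ ∃ r ∈ S.bar {s, t}, r ≠ s ∧ r ≠ t


namespace SPSaux

variable {σ : Type u} {L : Type v} [CompleteLattice L] (S : SPS σ L)

lemma mem_bar_pair {p q r : σ} : r ∈ S.bar {p, q} ↔ S.xi p ∩ S.xi q ⊆ S.xi r := by
  unfold SPS.bar; rw [Set.mem_setOf_eq, Set.biInter_pair]

lemma bar_pair_comm (p q : σ) : S.bar {p, q} = S.bar {q, p} := by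
  rw [Set.pair_comm]

lemma left_mem_bar_pair (p q : σ) : p ∈ S.bar {p, q} :=
  (mem_bar_pair S).mpr Set.inter_subset_left

lemma right_mem_bar_pair (p q : σ) : q ∈ S.bar {p, q} :=
  (mem_bar_pair S).mpr Set.inter_subset_right

lemma bar_mono {A B : Set σ} (h : A ⊆ B) : S.bar A ⊆ S.bar B := by
  intro r hr
  exact (Set.biInter_subset_biInter_left h).trans hr

lemma bar_singleton (hA : S.propA) (p : σ) : S.bar {p} = {p} := by
  ext r
  constructor
  · intro hr
    have h : S.xi p ⊆ S.xi r := by simpa [SPS.bar] using hr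
    exact (hA.2 p r h).symm
  · rintro rfl
    simp [SPS.bar]

lemma line_sub {p q c : σ} (hc : c ∈ S.bar {p, q}) : S.bar {p, c} ⊆ S.bar {p, q} := by
  intro r hr
  rw [mem_bar_pair] at hc hr ⊢
  exact (Set.subset_inter Set.inter_subset_left hc).trans hr

lemma ssub_left {p q : σ} (h : p ≠ q) : ({p} : Set σ) ⊂ {p, q} :=
  (Set.ssubset_iff_of_subset (by simp)).mpr
    ⟨q, by simp, by simpa using h.symm⟩

lemma ssub_right {p q : σ} (h : p ≠ q) : ({q} : Set σ) ⊂ {p, q} :=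
  (Set.ssubset_iff_of_subset (by simp)).mpr
    ⟨p, by simp, by simpa using h⟩

/-- Exchange property, from 2-MSP and (A). -/
lemma exch (hA : S.propA) (hM : S.nMSP 3) {p q r : σ} (hpq : p ≠ q)
    (hr : r ∈ S.bar {p, q}) (hrp : r ≠ p) (hrq : r ≠ q) :
    p ∈ S.bar {q, r} ∧ q ∈ S.bar {p, r} := by
  have hmin : S.minSup {p, q} r := by
    refine ⟨hr, ?_⟩
    intro Q hQ hrQ
    have hsub : Q ⊆ {p} ∨ Q ⊆ {q} := by
      by_cases hp : p ∈ Q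
      · by_cases hq : q ∈ Q
        · exfalso
          refine hQ.2 ?_
          intro y hy
          rcases hy with h | h
          · rw [h]; exact hp
          · rw [Set.mem_singleton_iff] at h; rw [h]; exact hq
        · left
          intro z hz
          rcases hQ.1 hz with h | h
          · exact h
          · rw [Set.mem_singleton_iff] at h
            exact absurd (h ▸ hz) hq
      · right
        intro z hz
        rcases hQ.1 hz with h | h
        · exact absurd (h ▸ hz) hp
        · exact h
    rcases hsub with h | h
    · have h2 := bar_mono S h hrQ
      rw [bar_singleton S hA, Set.mem_singleton_iff] at h2
      exact hrp h2
    · have h2 := bar_mono S h hrQ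
      rw [bar_singleton S hA, Set.mem_singleton_iff] at h2
      exact hrq h2
  have hfin : ({p, q} : Set σ).Finite := (Set.finite_singleton q).insert p
  have hcard : ({p, q} : Set σ).ncard ≤ 3 := by
    rw [Set.ncard_pair hpq]; omega
  have hMS := hM {p, q} hfin hcard r hmin
  constructor
  · obtain ⟨x, hx1, hx2⟩ := hMS {q} {p} (ssub_right hpq) (ssub_left hpq)
      (Set.singleton_inter_eq_empty.mpr (by simpa using hpq.symm))
      (by rw [Set.singleton_union, Set.pair_comm])
    rw [bar_singleton S hA, Set.mem_singleton_iff] at hx2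
    subst hx2
    rwa [Set.singleton_union] at hx1
  · obtain ⟨x, hx1, hx2⟩ := hMS {p} {q} (ssub_left hpq) (ssub_right hpq)
      (Set.singleton_inter_eq_empty.mpr (by simpa using hpq))
      (Set.singleton_union)
    rw [bar_singleton S hA, Set.mem_singleton_iff] at hx2
    subst hx2
    rwa [Set.singleton_union] at hx1

/-- Transitivity of the relation, from (A) and 3-MSP. -/
lemma rel_trans (hA : S.propA) (hM : S.nMSP 3) {s t u : σ}
    (h1 : S.rel s t) (h2 : S.rel t u) : S.rel s u := by
  by_cases hst : s = t
  · rw [hst]; exact h2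
  by_cases htu : t = u
  · rw [← htu]; exact h1
  by_cases hsu : s = u
  · exact Or.inl hsu
  rcases h1 with h | ⟨a, ha, has, hat⟩
  · exact absurd h hst
  rcases h2 with h | ⟨b, hb, hbt, hbu⟩
  · exact absurd h htu
  right
  by_cases hcol : u ∈ S.bar {s, t}
  · have h := exch S hA hM hst hcol (Ne.symm hsu) (fun h => htu h.symm)
    exact ⟨t, h.2, Ne.symm hst, htu⟩
  · have hau : a ≠ u := fun h => hcol (h ▸ ha)
    by_cases haSU : a ∈ S.bar {s, u}
    · exact ⟨a, haSU, has, hau⟩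
    have heb := exch S hA hM htu hb hbt hbu
    have htub : t ∈ S.bar {u, b} := heb.1
    have hutb : u ∈ S.bar {t, b} := heb.2
    have hbs : b ≠ s := by
      intro h
      have hs' : s ∈ S.bar {t, u} := h ▸ hb
      have h2 := (exch S hA hM htu hs' hst hsu).2
      rw [bar_pair_comm] at h2
      exact hcol h2
    have hatun : a ∉ S.bar {t, u} := by
      intro h
      have h2 := (exch S hA hM htu h hat hau).2
      have hsub : S.bar {t, a} ⊆ S.bar {t, s} := by
        apply line_sub
        rw [bar_pair_comm]; exact ha
      have h3 := hsub h2
      rw [bar_pair_comm] at h3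
      exact hcol h3
    have hab : a ≠ b := fun h => hatun (h ▸ hb)
    have haub : a ∉ S.bar {u, b} := by
      intro h
      have hsub : S.bar {u, b} ⊆ S.bar {u, t} := by
        apply line_sub
        rw [bar_pair_comm]; exact hb
      have h2 := hsub h
      rw [bar_pair_comm] at h2
      exact hatun h2
    have hbst : b ∉ S.bar {s, t} := by
      intro h
      have hsub : S.bar {t, b} ⊆ S.bar {t, s} := by
        apply line_sub
        rw [bar_pair_comm]; exact h
      have h2 := hsub hutb
      rw [bar_pair_comm] at h2
      exact hcol h2
    have hasb : a ∉ S.bar {s, b} := by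
      intro h
      have h2 := (exch S hA hM hbs.symm h has hab).2
      exact hbst (line_sub S ha h2)
    have hbarA : a ∈ S.bar {s, u, b} := by
      unfold SPS.bar
      rw [Set.mem_setOf_eq]
      have h1 : (⋂ x ∈ ({s, u, b} : Set σ), S.xi x) = S.xi s ∩ (S.xi u ∩ S.xi b) := by
        rw [Set.biInter_insert, Set.biInter_pair]
      rw [h1]
      have h2 : S.xi u ∩ S.xi b ⊆ S.xi t := (mem_bar_pair S).mp htub
      have h3 : S.xi s ∩ S.xi t ⊆ S.xi a := (mem_bar_pair S).mp ha
      exact (Set.inter_subset_inter_right _ h2).trans h3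
    have hmin : S.minSup {s, u, b} a := by
      refine ⟨hbarA, ?_⟩
      intro Q hQ haQ
      have hsub : Q ⊆ {s, u} ∨ Q ⊆ {s, b} ∨ Q ⊆ {u, b} := by
        by_cases hs' : s ∈ Q
        · by_cases hu' : u ∈ Q
          · by_cases hb' : b ∈ Q
            · exfalso
              refine hQ.2 ?_
              intro y hy
              rcases hy with h | h | h
              · rw [h]; exact hs'
              · rw [h]; exact hu'
              · rw [Set.mem_singleton_iff] at h; rw [h]; exact hb'
            · left
              intro z hz
              rcases hQ.1 hz with h | h | h
              · exact Or.inl h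
              · exact Or.inr h
              · rw [Set.mem_singleton_iff] at h
                exact absurd (h ▸ hz) hb'
          · right; left
            intro z hz
            rcases hQ.1 hz with h | h | h
            · exact Or.inl h
            · exact absurd (h ▸ hz) hu'
            · rw [Set.mem_singleton_iff] at h
              exact Or.inr h
        · right; right
          intro z hz
          rcases hQ.1 hz with h | h | h
          · exact absurd (h ▸ hz) hs'
          · exact Or.inl h
          · rw [Set.mem_singleton_iff] at h
            exact Or.inr h
      rcases hsub with h | h | h
      · exact haSU (bar_mono S h haQ)
      · exact hasb (bar_mono S h haQ)
      · exact haub (bar_mono S h haQ)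
    have hfin : ({s, u, b} : Set σ).Finite :=
      (((Set.finite_singleton b).insert u).insert s)
    have hcard : ({s, u, b} : Set σ).ncard ≤ 3 := by
      have h1 := Set.ncard_insert_le s ({u, b} : Set σ)
      have h2 := Set.ncard_insert_le u ({b} : Set σ)
      rw [Set.ncard_singleton] at h2
      omega
    have hssub1 : ({b} : Set σ) ⊂ {s, u, b} := by
      rw [Set.ssubset_iff_of_subset (by intro z hz; simp only [Set.mem_singleton_iff] at hz; simp [hz])]
      exact ⟨s, by left; rfl, by simpa using hbs.symm⟩
    have hssub2 : ({s, u} : Set σ) ⊂ {s, u, b} := by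
      rw [Set.ssubset_iff_of_subset (by intro z hz; simp only [Set.mem_insert_iff, Set.mem_singleton_iff] at hz ⊢; tauto)]
      exact ⟨b, by right; right; rfl, by simp [hbs, hbu]⟩
    obtain ⟨x, hx1, hx2⟩ := hM {s, u, b} hfin hcard a hmin {b} {s, u} hssub1 hssub2
      (Set.singleton_inter_eq_empty.mpr (by simp [hbs, hbu]))
      (by ext z; simp only [Set.mem_union, Set.mem_singleton_iff, Set.mem_insert_iff]; tauto)
    rw [Set.singleton_union] at hx1
    have hxs : x ≠ s := by
      intro h
      have hs' : s ∈ S.bar {b, a} := h ▸ hx1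
      have h2 := (exch S hA hM hab.symm hs' hbs.symm has.symm).1
      rw [bar_pair_comm] at h2
      exact hbst (line_sub S ha h2)
    have hxu : x ≠ u := by
      intro h
      have hu' : u ∈ S.bar {b, a} := h ▸ hx1
      have h2 := (exch S hA hM hab.symm hu' hbu.symm hau.symm).2
      rw [bar_pair_comm] at h2
      exact haub h2
    exact ⟨x, hx2, hxs, hxu⟩

end SPSaux


theorem stmt17 (S : SPS σ L) :
    -- two sectors are equal or disjoint
    (∀ T U : Set σ, S.Sector T → S.Sector U → T = U ∨ T ∩ U = ∅) ∧
    (S.propA → S.nMSP 3 →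
      Equivalence S.rel ∧
      (∀ s : σ, S.Sector {t : σ | S.rel s t}) ∧
      (⋃ s : σ, {t : σ | S.rel s t}) = Set.univ) := by
  constructor
  · intro T U hT hU
    by_cases h : T ∩ U = ∅
    · exact Or.inr h
    · left
      obtain ⟨p, hpT, hpU⟩ := Set.nonempty_iff_ne_empty.mpr h
      ext t
      constructor
      · intro htT
        by_contra htU
        have hpt : p ≠ t := fun h' => htU (h' ▸ hpU)
        obtain ⟨r, hr, hrp, hrt⟩ := hT.2.2.1 p hpT t htT hpt
        rw [hU.2.2.2 p hpU t htU] at hr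
        rcases hr with h' | h'
        · exact hrp h'
        · rw [Set.mem_singleton_iff] at h'
          exact hrt h'
      · intro htU
        by_contra htT
        have hpt : p ≠ t := fun h' => htT (h' ▸ hpT)
        obtain ⟨r, hr, hrp, hrt⟩ := hU.2.2.1 p hpU t htU hpt
        rw [hT.2.2.2 p hpT t htT] at hr
        rcases hr with h' | h'
        · exact hrp h'
        · rw [Set.mem_singleton_iff] at h'
          exact hrt h'
  · intro hA hM
    have hsymm : ∀ {x y : σ}, S.rel x y → S.rel y x := by
      intro x y h
      rcases h with h | ⟨r, hr, h1, h2⟩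
      · exact Or.inl h.symm
      · exact Or.inr ⟨r, by rwa [Set.pair_comm], h2, h1⟩
    have htrans : ∀ {x y z : σ}, S.rel x y → S.rel y z → S.rel x z :=
      fun h1 h2 => SPSaux.rel_trans S hA hM h1 h2
    have hequiv : Equivalence S.rel := ⟨fun x => Or.inl rfl, hsymm, htrans⟩
    refine ⟨hequiv, ?_, ?_⟩
    · intro s
      refine ⟨⟨s, Or.inl rfl⟩, ?_, ?_, ?_⟩
      · intro p hp q hq r hr
        have hr' : r ∈ S.bar {p, q} := (SPSaux.mem_bar_pair S).mpr hr
        by_cases hpq : p = q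
        · have hxi : S.xi p ⊆ S.xi r := by
            have h2 : S.xi p ∩ S.xi q ⊆ S.xi r := hr
            rw [← hpq, Set.inter_self] at h2
            exact h2
          have h3 : p = r := hA.2 p r hxi
          exact h3 ▸ hp
        by_cases hrp : r = p
        · rw [Set.mem_setOf_eq, hrp]
          exact hp
        by_cases hrq : r = q
        · rw [Set.mem_setOf_eq, hrq]
          exact hq
        have hex := SPSaux.exch S hA hM hpq hr' hrp hrq
        have hpr : S.rel p r := Or.inr ⟨q, hex.2, Ne.symm hpq, fun h => hrq h.symm⟩
        exact htrans hp hpr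
      · intro p hp q hq hpq
        have hpq' : S.rel p q := htrans (hsymm hp) hq
        rcases hpq' with h | ⟨r, hr, h1, h2⟩
        · exact absurd h hpq
        · exact ⟨r, hr, h1, h2⟩
      · intro p hp q hq
        ext r
        constructor
        · intro hr
          by_contra hr'
          simp only [Set.mem_insert_iff, Set.mem_singleton_iff, not_or] at hr'
          obtain ⟨hrp, hrq⟩ := hr'
          have hpq : p ≠ q := fun h => hq (h ▸ hp)
          have hrel : S.rel p q := Or.inr ⟨r, hr, hrp, hrq⟩
          exact hq (htrans hp hrel)
        · intro hr
          rcases hr with h | h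
          · rw [h]; exact SPSaux.left_mem_bar_pair S _ _
          · rw [Set.mem_singleton_iff] at h
            rw [h]; exact SPSaux.right_mem_bar_pair S _ _
    · ext x
      simp only [Set.mem_iUnion, Set.mem_setOf_eq, Set.mem_univ, iff_true]
      exact ⟨x, Or.inl rfl⟩
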